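/- Any two finitely branching trees with ω levels encoded by the same template are locally isomorphic: for every n, the unions of their first n levels are order-isomorphic. -/

import Mathlib

/-- A well-founded tree order of height at most ω: a partial order with a least
element (root) in which the set of predecessors of every element is finite and
linearly ordered. -/
structure TreeOrder (T : Type*) where
  le : T → T → Prop
  refl : ∀ x, le x x
  antisymm : ∀ x y, le x y → le y x → x = y
  trans : ∀ x y z, le x y → le y z → le x z
  root : T
  root_le : ∀ x, le root x
  pred_finite : ∀ x, {y | le y x}.Finite
  pred_chain : ∀ x y z, le y x → le z x → le y z ∨ le z y

namespace TreeOrder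

variable {T : Type*} (t : TreeOrder T)

/-- The strict order associated to a tree order. -/
def lt (x y : T) : Prop := t.le x y ∧ x ≠ y

/-- The `n`-th level: elements with exactly `n` strict predecessors. -/
def level (n : ℕ) : Set T := {x | {y | t.lt y x}.ncard = n}

/-- The tree has ω levels: every level is nonempty. -/
def OmegaLevels : Prop := ∀ n, (t.level n).Nonempty

/-- All levels are finite. -/
def FiniteLevels : Prop := ∀ n, (t.level n).Finite

/-- No leaves: every element has a strict successor. -/
def NoLeaves : Prop := ∀ x, ∃ y, t.lt x y

/-- `y` is an immediate successor of `x`. -/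
def ImmSucc (x y : T) : Prop := t.lt x y ∧ ¬ ∃ z, t.lt x z ∧ t.lt z y

/-- Union of the first `n` levels. -/
def below (n : ℕ) : Set T := {x | ∃ k < n, x ∈ t.level k}

end TreeOrder

namespace TreeOrder

variable {T : Type*} (t : TreeOrder T)

noncomputable def lev (x : T) : ℕ := {y | t.lt y x}.ncard

variable {t}

lemma mem_level_iff {x : T} {n : ℕ} : x ∈ t.level n ↔ t.lev x = n := Iff.rfl

lemma mem_below_iff {x : T} {n : ℕ} : x ∈ t.below n ↔ t.lev x < n := by
  constructor
  · rintro ⟨k, hk, hx⟩; rw [mem_level_iff] at hx; omega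
  · intro h; exact ⟨t.lev x, h, rfl⟩

lemma lt_finite (x : T) : {y | t.lt y x}.Finite :=
  (t.pred_finite x).subset (fun y hy => hy.1)

lemma lt_of_lt_of_le {x y z : T} (h : t.lt x y) (h' : t.le y z) : t.lt x z := by
  refine ⟨t.trans _ _ _ h.1 h', ?_⟩
  rintro rfl
  exact h.2 (t.antisymm _ _ h.1 h')

lemma lt_of_le_of_lt {x y z : T} (h : t.le x y) (h' : t.lt y z) : t.lt x z := by
  refine ⟨t.trans _ _ _ h h'.1, ?_⟩
  rintro rfl
  exact h'.2 (t.antisymm _ _ h'.1 h)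

lemma lev_lt_of_lt {x y : T} (h : t.lt x y) : t.lev x < t.lev y := by
  have hsub : {z | t.lt z x} ⊆ {z | t.lt z y} := fun z hz => lt_of_lt_of_le hz h.1
  exact Set.ncard_lt_ncard
    ((Set.ssubset_iff_of_subset hsub).mpr ⟨x, h, fun h' => h'.2 rfl⟩) (lt_finite y)

lemma lev_le_of_le {x y : T} (h : t.le x y) : t.lev x ≤ t.lev y := by
  by_cases hxy : x = y
  · subst hxy; exact le_rfl
  · exact (lev_lt_of_lt ⟨h, hxy⟩).le

lemma eq_of_le_of_lev_le {x y : T} (h : t.le x y) (hl : t.lev y ≤ t.lev x) : x = y := by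
  by_contra hxy
  exact absurd hl (by simpa using lev_lt_of_lt (t := t) ⟨h, hxy⟩)

lemma immSucc_pred_set {p x : T} (h : t.ImmSucc p x) :
    {z | t.lt z x} = insert p {z | t.lt z p} := by
  ext z
  simp only [Set.mem_setOf_eq, Set.mem_insert_iff]
  constructor
  · intro hz
    rcases t.pred_chain x z p hz.1 h.1.1 with hzp | hpz
    · rcases eq_or_ne z p with rfl | hne
      · exact Or.inl rfl
      · exact Or.inr ⟨hzp, hne⟩
    · rcases eq_or_ne p z with rfl | hne
      · exact Or.inl rfl
      · exact absurd ⟨z, ⟨hpz, hne⟩, hz⟩ h.2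
  · rintro (rfl | hz)
    · exact h.1
    · exact lt_of_lt_of_le hz h.1.1

lemma immSucc_lev {p x : T} (h : t.ImmSucc p x) : t.lev x = t.lev p + 1 := by
  have := immSucc_pred_set h
  unfold lev
  rw [this, Set.ncard_insert_of_notMem (fun hc => hc.2 rfl) (lt_finite p)]

lemma lt_iff_le_pred {p x : T} (h : t.ImmSucc p x) {w : T} : t.lt w x ↔ t.le w p := by
  constructor
  · intro hw
    have hmem : w ∈ insert p {z | t.lt z p} := by
      rw [← immSucc_pred_set h]; exact hw
    rcases hmem with rfl | hw'
    · exact t.refl w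
    · exact hw'.1
  · intro hw
    rcases eq_or_ne w p with rfl | hne
    · exact h.1
    · exact lt_of_le_of_lt hw h.1

lemma immSucc_unique {p q x : T} (hp : t.ImmSucc p x) (hq : t.ImmSucc q x) : p = q := by
  have h1 : t.le p q := (lt_iff_le_pred hq).mp hp.1
  have h2 : t.le q p := (lt_iff_le_pred hp).mp hq.1
  exact t.antisymm _ _ h1 h2

lemma lev_root : t.lev t.root = 0 := by
  unfold lev
  convert Set.ncard_empty T
  ext z
  simp only [Set.mem_setOf_eq, Set.mem_empty_iff_false, iff_false]
  intro hz
  exact hz.2 (t.antisymm _ _ hz.1 (t.root_le z))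

lemma eq_root_of_lev_eq_zero {x : T} (h : t.lev x = 0) : x = t.root := by
  by_contra hx
  have : t.lt t.root x := ⟨t.root_le x, fun h' => hx h'.symm⟩
  have := lev_lt_of_lt this
  omega

lemma exists_immSucc_pred {x : T} {n : ℕ} (hx : t.lev x = n + 1) :
    ∃ p, t.ImmSucc p x ∧ t.lev p = n := by
  have hfin : {y | t.lt y x}.Finite := lt_finite x
  have hne : {y | t.lt y x}.Nonempty := Set.nonempty_of_ncard_ne_zero (by rw [← lev]; omega)
  obtain ⟨p, hp, hmax⟩ := Set.Finite.exists_maximalFor t.lev _ hfin hne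
  have hple : ∀ z ∈ {y | t.lt y x}, t.le z p := by
    intro z hz
    rcases t.pred_chain x z p hz.1 hp.1 with h | h
    · exact h
    · obtain rfl := eq_of_le_of_lev_le h (hmax hz (lev_le_of_le h))
      exact t.refl _
  have himm : t.ImmSucc p x := by
    refine ⟨hp, ?_⟩
    rintro ⟨z, hpz, hzx⟩
    exact hpz.2 (t.antisymm _ _ hpz.1 (hple z hzx))
  refine ⟨p, himm, ?_⟩
  have := immSucc_lev himm
  omega

end TreeOrder



/-- A template: a tree with ω levels, all finite (hence finitely branching),
together with a linear order on the immediate successors of each node and a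
positive integer label on each edge. -/
structure Template (A : Type*) where
  t : TreeOrder A
  omega : t.OmegaLevels
  finlev : t.FiniteLevels
  label : A → A → ℕ
  label_pos : ∀ X Y, t.ImmSucc X Y → 0 < label X Y
  sOrd : A → A → A → Prop
  sOrd_trans : ∀ X Y Z W, t.ImmSucc X Y → t.ImmSucc X Z → t.ImmSucc X W →
    sOrd X Y Z → sOrd X Z W → sOrd X Y W
  sOrd_antisymm : ∀ X Y Z, t.ImmSucc X Y → t.ImmSucc X Z →
    sOrd X Y Z → sOrd X Z Y → Y = Z
  sOrd_total : ∀ X Y Z, t.ImmSucc X Y → t.ImmSucc X Z → sOrd X Y Z ∨ sOrd X Z Y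

/-- A tree `t` (with ω levels, all finite) is encoded by the template `τ` via
pieces `E X`: the pieces corresponding to the n-th level of the template
partition the n-th level of the tree, every element of the piece `E X` has
exactly `label X Y` immediate successors in the piece `E Y` for every
≺-immediate successor `Y` of `X`, and no other immediate successors. -/
def Encodes {A T : Type*} (τ : Template A) (t : TreeOrder T) (E : A → Set T) : Prop :=
  t.OmegaLevels ∧ t.FiniteLevels ∧
  (∀ n, ∀ X ∈ τ.t.level n, (E X).Nonempty ∧ E X ⊆ t.level n) ∧
  (∀ n, ∀ x ∈ t.level n, ∃! X, X ∈ τ.t.level n ∧ x ∈ E X) ∧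
  (∀ X Y, τ.t.ImmSucc X Y → ∀ x ∈ E X, {y | y ∈ E Y ∧ t.ImmSucc x y}.ncard = τ.label X Y) ∧
  (∀ x y : T, t.ImmSucc x y → ∃ X Y, τ.t.ImmSucc X Y ∧ x ∈ E X ∧ y ∈ E Y)

namespace TreeOrder

variable {T₁ T₂ : Type*} {t1 : TreeOrder T₁} {t2 : TreeOrder T₂} {f : T₁ → T₂} {n : ℕ}

lemma bij_lt_iff (hbij : Set.BijOn f (t1.below n) (t2.below n))
    (hord : ∀ x ∈ t1.below n, ∀ y ∈ t1.below n, (t1.le x y ↔ t2.le (f x) (f y))) :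
    ∀ x ∈ t1.below n, ∀ y ∈ t1.below n, (t1.lt x y ↔ t2.lt (f x) (f y)) := by
  intro x hx y hy
  constructor
  · intro h
    exact ⟨(hord x hx y hy).mp h.1, fun he => h.2 (hbij.2.1 hx hy he)⟩
  · intro h
    exact ⟨(hord x hx y hy).mpr h.1, fun he => h.2 (congrArg f he)⟩

lemma bij_lev (hbij : Set.BijOn f (t1.below n) (t2.below n))
    (hord : ∀ x ∈ t1.below n, ∀ y ∈ t1.below n, (t1.le x y ↔ t2.le (f x) (f y))) :
    ∀ x ∈ t1.below n, t2.lev (f x) = t1.lev x := by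
  intro x hx
  have hxlt : t1.lev x < n := mem_below_iff.mp hx
  have hsub : {w | t1.lt w x} ⊆ t1.below n := by
    intro w hw
    exact mem_below_iff.mpr (Nat.lt_trans (lev_lt_of_lt hw) hxlt)
  have himg : f '' {w | t1.lt w x} = {w | t2.lt w (f x)} := by
    ext w'
    constructor
    · rintro ⟨w, hw, rfl⟩
      exact (bij_lt_iff hbij hord w (hsub hw) x hx).mp hw
    · intro hw'
      have hw'b : w' ∈ t2.below n :=
        mem_below_iff.mpr (Nat.lt_trans (lev_lt_of_lt hw')
          (mem_below_iff.mp (hbij.1 hx)))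
      obtain ⟨w, hwb, rfl⟩ := hbij.2.2 hw'b
      exact ⟨w, (bij_lt_iff hbij hord w hwb x hx).mpr hw', rfl⟩
  show {w | t2.lt w (f x)}.ncard = {w | t1.lt w x}.ncard
  rw [← himg, Set.ncard_image_of_injOn (hbij.2.1.mono hsub)]

end TreeOrder

namespace Encodes

open TreeOrder

variable {A T : Type*} {τ : Template A} {t : TreeOrder T} {E : A → Set T}

lemma piece_lev (h : Encodes τ t E) {X : A} {x : T} (hx : x ∈ E X) :
    t.lev x = τ.t.lev X :=
  (h.2.2.1 (τ.t.lev X) X rfl).2 hx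

lemma piece_unique (h : Encodes τ t E) {X X' : A} {x : T} (hx : x ∈ E X)
    (hx' : x ∈ E X') : X = X' := by
  obtain ⟨Z, hZ, hun⟩ := h.2.2.2.1 (t.lev x) x rfl
  have e1 : X = Z := hun X ⟨(h.piece_lev hx).symm, hx⟩
  have e2 : X' = Z := hun X' ⟨(h.piece_lev hx').symm, hx'⟩
  rw [e1, e2]

lemma exists_piece (h : Encodes τ t E) (x : T) : ∃ X, x ∈ E X := by
  obtain ⟨Z, ⟨hZ1, hZ2⟩, _⟩ := h.2.2.2.1 (t.lev x) x rfl
  exact ⟨Z, hZ2⟩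

end Encodes

/-- Any two trees encoded by the same template are locally isomorphic. -/
theorem stmt9 {A T₁ T₂ : Type*} (τ : Template A) (t1 : TreeOrder T₁) (t2 : TreeOrder T₂)
    (E1 : A → Set T₁) (E2 : A → Set T₂)
    (h1 : Encodes τ t1 E1) (h2 : Encodes τ t2 E2) :
    ∀ n, ∃ f : T₁ → T₂, Set.BijOn f (t1.below n) (t2.below n) ∧
      ∀ x ∈ t1.below n, ∀ y ∈ t1.below n, (t1.le x y ↔ t2.le (f x) (f y)) := by
  classical
  have hne2 : Nonempty T₂ := ⟨t2.root⟩
  obtain ⟨P1, hP1⟩ := Classical.axiomOfChoice (h1.exists_piece)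
  obtain ⟨P2, hP2⟩ := Classical.axiomOfChoice (h2.exists_piece)
  suffices H : ∀ n, ∃ f : T₁ → T₂, Set.BijOn f (t1.below n) (t2.below n) ∧
      (∀ x ∈ t1.below n, ∀ y ∈ t1.below n, (t1.le x y ↔ t2.le (f x) (f y))) ∧
      (∀ X, ∀ x ∈ t1.below n, (x ∈ E1 X ↔ f x ∈ E2 X)) by
    intro n
    obtain ⟨f, hf1, hf2, _⟩ := H n
    exact ⟨f, hf1, hf2⟩
  intro n
  induction n with
  | zero =>
    have e1 : t1.below 0 = ∅ := by
      ext x; simp [TreeOrder.below]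
    have e2 : t2.below 0 = ∅ := by
      ext x; simp [TreeOrder.below]
    refine ⟨fun _ => t2.root, ?_, ?_, ?_⟩
    · rw [e1, e2]; exact Set.bijOn_empty _
    · rw [e1]; simp
    · rw [e1]; simp
  | succ m ih =>
    obtain ⟨f, hbij, hord, hpiece⟩ := ih
    have hflev := TreeOrder.bij_lev hbij hord
    match m with
    | 0 =>
      -- below 1 = {root}
      have hmem1 : ∀ x : T₁, x ∈ t1.below 1 ↔ x = t1.root := by
        intro x
        rw [TreeOrder.mem_below_iff]
        constructor
        · intro h; exact TreeOrder.eq_root_of_lev_eq_zero (by omega)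
        · rintro rfl; rw [TreeOrder.lev_root]; omega
      have hmem2 : ∀ x : T₂, x ∈ t2.below 1 ↔ x = t2.root := by
        intro x
        rw [TreeOrder.mem_below_iff]
        constructor
        · intro h; exact TreeOrder.eq_root_of_lev_eq_zero (by omega)
        · rintro rfl; rw [TreeOrder.lev_root]; omega
      have hroots : P1 t1.root = P2 t2.root := by
        have l1 : τ.t.lev (P1 t1.root) = 0 := by
          rw [← h1.piece_lev (hP1 t1.root), TreeOrder.lev_root]
        have l2 : τ.t.lev (P2 t2.root) = 0 := by
          rw [← h2.piece_lev (hP2 t2.root), TreeOrder.lev_root]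
        rw [TreeOrder.eq_root_of_lev_eq_zero l1, TreeOrder.eq_root_of_lev_eq_zero l2]
      refine ⟨fun _ => t2.root, ⟨?_, ?_, ?_⟩, ?_, ?_⟩
      · intro x hx; exact (hmem2 t2.root).mpr rfl
      · intro x hx y hy _
        rw [(hmem1 x).mp hx, (hmem1 y).mp hy]
      · intro z hz
        exact ⟨t1.root, (hmem1 t1.root).mpr rfl, ((hmem2 z).mp hz).symm⟩
      · intro x hx y hy
        rw [(hmem1 x).mp hx, (hmem1 y).mp hy]
        simp [t1.refl, t2.refl]
      · intro X x hx
        rw [(hmem1 x).mp hx]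
        constructor
        · intro hX
          have : X = P1 t1.root := h1.piece_unique hX (hP1 t1.root)
          rw [this, hroots]; exact hP2 t2.root
        · intro hX
          have : X = P2 t2.root := h2.piece_unique hX (hP2 t2.root)
          rw [this, ← hroots]; exact hP1 t1.root
    | k + 1 =>
      -- new level is k+1; immediate predecessors live at level k
      set S1 : T₁ → A → Set T₁ := fun x Y => {z | z ∈ E1 Y ∧ t1.ImmSucc x z} with hS1
      set S2 : T₂ → A → Set T₂ := fun x Y => {z | z ∈ E2 Y ∧ t2.ImmSucc x z} with hS2
      -- immediate predecessor for level-(k+1) elements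
      have hp : ∀ y : T₁, ∃ p, t1.lev y = k + 1 → t1.ImmSucc p y ∧ t1.lev p = k := by
        intro y
        by_cases hy : t1.lev y = k + 1
        · obtain ⟨p, hp1, hp2⟩ := TreeOrder.exists_immSucc_pred hy
          exact ⟨p, fun _ => ⟨hp1, hp2⟩⟩
        · exact ⟨t1.root, fun h => absurd h hy⟩
      obtain ⟨p1, hp1s⟩ := Classical.axiomOfChoice hp
      -- chosen bijections between successor blocks
      have hF : ∀ x : T₁, ∀ Y : A, ∃ g : T₁ → T₂,
          t1.lev x = k → τ.t.ImmSucc (P1 x) Y →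
            Set.BijOn g (S1 x Y) (S2 (f x) Y) := by
        intro x Y
        by_cases hx : t1.lev x = k ∧ τ.t.ImmSucc (P1 x) Y
        · obtain ⟨hxk, hXY⟩ := hx
          have hxb : x ∈ t1.below (k + 1) := TreeOrder.mem_below_iff.mpr (by omega)
          have hfx : f x ∈ E2 (P1 x) := (hpiece (P1 x) x hxb).mp (hP1 x)
          have hc1 : (S1 x Y).ncard = τ.label (P1 x) Y := h1.2.2.2.2.1 (P1 x) Y hXY x (hP1 x)
          have hc2 : (S2 (f x) Y).ncard = τ.label (P1 x) Y :=
            h2.2.2.2.2.1 (P1 x) Y hXY (f x) hfx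
          have hfin1 : (S1 x Y).Finite := by
            refine (h1.2.1 (k + 1)).subset ?_
            intro z hz
            show t1.lev z = k + 1
            rw [TreeOrder.immSucc_lev hz.2, hxk]
          have hfin2 : (S2 (f x) Y).Finite := by
            refine (h2.2.1 (k + 1)).subset ?_
            intro z hz
            show t2.lev z = k + 1
            rw [TreeOrder.immSucc_lev hz.2, hflev x hxb, hxk]
          have hcard : (S1 x Y).encard = (S2 (f x) Y).encard := by
            rw [← hfin1.cast_ncard_eq, ← hfin2.cast_ncard_eq, hc1, hc2]
          obtain ⟨g, hg⟩ := Set.Finite.exists_bijOn_of_encard_eq hfin1 hcard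
          exact ⟨g, fun _ _ => hg⟩
        · refine ⟨fun _ => t2.root, fun h1' h2' => absurd ⟨h1', h2'⟩ hx⟩
      obtain ⟨F, hFs⟩ := Classical.axiomOfChoice (fun x => Classical.axiomOfChoice (hF x))
      set g : T₁ → T₂ := fun y =>
        if t1.lev y = k + 1 then F (p1 y) (P1 y) y else f y with hg
      have hglow : ∀ y : T₁, t1.lev y < k + 1 → g y = f y := by
        intro y hy
        rw [hg]; simp only
        rw [if_neg (by omega)]
      -- key facts for high-level elements
      have hkey : ∀ y : T₁, t1.lev y = k + 1 →
          t1.ImmSucc (p1 y) y ∧ t1.lev (p1 y) = k ∧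
          τ.t.ImmSucc (P1 (p1 y)) (P1 y) ∧
          g y ∈ S2 (f (p1 y)) (P1 y) := by
        intro y hy
        obtain ⟨himm, hlevp⟩ := hp1s y hy
        have hXY : τ.t.ImmSucc (P1 (p1 y)) (P1 y) := by
          obtain ⟨X, Y', hXY', hx', hy'⟩ := h1.2.2.2.2.2 (p1 y) y himm
          rwa [h1.piece_unique (hP1 (p1 y)) hx', h1.piece_unique (hP1 y) hy']
        have hbijF := hFs (p1 y) (P1 y) hlevp hXY
        have hyS : y ∈ S1 (p1 y) (P1 y) := ⟨hP1 y, himm⟩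
        have : g y = F (p1 y) (P1 y) y := by rw [hg]; simp only; rw [if_pos hy]
        exact ⟨himm, hlevp, hXY, this ▸ hbijF.1 hyS⟩
      have hglev : ∀ y : T₁, t1.lev y = k + 1 → t2.lev (g y) = k + 1 := by
        intro y hy
        obtain ⟨himm, hlevp, hXY, hgS⟩ := hkey y hy
        have hpb : p1 y ∈ t1.below (k + 1) := TreeOrder.mem_below_iff.mpr (by omega)
        rw [TreeOrder.immSucc_lev hgS.2, hflev _ hpb, hlevp]
      -- injectivity on the new level
      have hinjHigh : ∀ y₁ y₂ : T₁, t1.lev y₁ = k + 1 → t1.lev y₂ = k + 1 →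
          g y₁ = g y₂ → y₁ = y₂ := by
        intro y₁ y₂ hy₁ hy₂ he
        obtain ⟨himm₁, hlevp₁, hXY₁, hgS₁⟩ := hkey y₁ hy₁
        obtain ⟨himm₂, hlevp₂, hXY₂, hgS₂⟩ := hkey y₂ hy₂
        have hfp : f (p1 y₁) = f (p1 y₂) :=
          TreeOrder.immSucc_unique hgS₁.2 (he ▸ hgS₂.2)
        have hpb₁ : p1 y₁ ∈ t1.below (k + 1) := TreeOrder.mem_below_iff.mpr (by omega)
        have hpb₂ : p1 y₂ ∈ t1.below (k + 1) := TreeOrder.mem_below_iff.mpr (by omega)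
        have hpe : p1 y₁ = p1 y₂ := hbij.2.1 hpb₁ hpb₂ hfp
        have hYe : P1 y₁ = P1 y₂ := h2.piece_unique hgS₁.1 (he ▸ hgS₂.1)
        have hbijF := hFs (p1 y₁) (P1 y₁) hlevp₁ hXY₁
        have hy₁S : y₁ ∈ S1 (p1 y₁) (P1 y₁) := ⟨hP1 y₁, himm₁⟩
        have hy₂S : y₂ ∈ S1 (p1 y₁) (P1 y₁) := by
          rw [hpe, hYe]; exact ⟨hP1 y₂, himm₂⟩
        refine hbijF.2.1 hy₁S hy₂S ?_
        have e₁ : g y₁ = F (p1 y₁) (P1 y₁) y₁ := by rw [hg]; simp only; rw [if_pos hy₁]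
        have e₂ : g y₂ = F (p1 y₂) (P1 y₂) y₂ := by rw [hg]; simp only; rw [if_pos hy₂]
        rw [← e₁, he, e₂, hpe, hYe]
      have hsplit : ∀ y : T₁, y ∈ t1.below (k + 2) → t1.lev y < k + 1 ∨ t1.lev y = k + 1 := by
        intro y hy
        have := TreeOrder.mem_below_iff.mp hy
        omega
      refine ⟨g, ⟨?_, ?_, ?_⟩, ?_, ?_⟩
      · -- MapsTo
        intro y hy
        rcases hsplit y hy with h | h
        · rw [hglow y h]
          have : f y ∈ t2.below (k + 1) := hbij.1 (TreeOrder.mem_below_iff.mpr h)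
          exact TreeOrder.mem_below_iff.mpr (by have := TreeOrder.mem_below_iff.mp this; omega)
        · exact TreeOrder.mem_below_iff.mpr (by rw [hglev y h]; omega)
      · -- InjOn
        intro y₁ h₁ y₂ h₂ he
        rcases hsplit y₁ h₁ with hl₁ | hh₁ <;> rcases hsplit y₂ h₂ with hl₂ | hh₂
        · rw [hglow y₁ hl₁, hglow y₂ hl₂] at he
          exact hbij.2.1 (TreeOrder.mem_below_iff.mpr hl₁) (TreeOrder.mem_below_iff.mpr hl₂) he
        · exfalso
          have l1 : t2.lev (g y₁) < k + 1 := by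
            rw [hglow y₁ hl₁]
            have := TreeOrder.mem_below_iff.mp (hbij.1 (TreeOrder.mem_below_iff.mpr hl₁))
            omega
          have l2 := hglev y₂ hh₂
          rw [he] at l1; omega
        · exfalso
          have l2 : t2.lev (g y₂) < k + 1 := by
            rw [hglow y₂ hl₂]
            have := TreeOrder.mem_below_iff.mp (hbij.1 (TreeOrder.mem_below_iff.mpr hl₂))
            omega
          have l1 := hglev y₁ hh₁
          rw [he] at l1; omega
        · exact hinjHigh y₁ y₂ hh₁ hh₂ he
      · -- SurjOn
        intro z hz
        have hzlev := TreeOrder.mem_below_iff.mp hz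
        by_cases hzl : t2.lev z < k + 1
        · obtain ⟨y, hy, hfy⟩ := hbij.2.2 (TreeOrder.mem_below_iff.mpr hzl)
          have hylev := TreeOrder.mem_below_iff.mp hy
          refine ⟨y, TreeOrder.mem_below_iff.mpr (by omega), ?_⟩
          rw [hglow y hylev]; exact hfy
        · have hzh : t2.lev z = k + 1 := by omega
          obtain ⟨q, hqimm, hqlev⟩ := TreeOrder.exists_immSucc_pred hzh
          obtain ⟨x, hxb, hfx⟩ := hbij.2.2 (TreeOrder.mem_below_iff.mpr (show t2.lev q < k + 1 by omega))
          have hxlev : t1.lev x = k := by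
            have := hflev x hxb; rw [hfx] at this; omega
          obtain ⟨X', Z', hXZ', hq', hz'⟩ := h2.2.2.2.2.2 q z hqimm
          have hX'e : X' = P1 x := by
            have hfx2 : f x ∈ E2 (P1 x) := (hpiece (P1 x) x hxb).mp (hP1 x)
            exact h2.piece_unique (hfx ▸ hq') hfx2
          rw [hX'e] at hXZ'
          have hbijF := hFs x Z' hxlev hXZ'
          have hzS : z ∈ S2 (f x) Z' := ⟨hz', hfx ▸ hqimm⟩
          obtain ⟨y, hyS, hFy⟩ := hbijF.2.2 hzS
          have hyimm : t1.ImmSucc x y := hyS.2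
          have hylev : t1.lev y = k + 1 := by
            rw [TreeOrder.immSucc_lev hyimm, hxlev]
          obtain ⟨himm, hlevp, hXY, hgS⟩ := hkey y hylev
          have hpe : p1 y = x := TreeOrder.immSucc_unique himm hyimm
          have hYe : P1 y = Z' := h1.piece_unique (hP1 y) hyS.1
          refine ⟨y, TreeOrder.mem_below_iff.mpr (by omega), ?_⟩
          have e : g y = F (p1 y) (P1 y) y := by rw [hg]; simp only; rw [if_pos hylev]
          rw [e, hpe, hYe, hFy]
      · -- order preservation
        intro y₁ h₁ y₂ h₂
        rcases hsplit y₁ h₁ with hl₁ | hh₁ <;> rcases hsplit y₂ h₂ with hl₂ | hh₂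
        · rw [hglow y₁ hl₁, hglow y₂ hl₂]
          exact hord y₁ (TreeOrder.mem_below_iff.mpr hl₁) y₂ (TreeOrder.mem_below_iff.mpr hl₂)
        · -- y₁ low, y₂ high
          obtain ⟨himm, hlevp, hXY, hgS⟩ := hkey y₂ hh₂
          have hpb : p1 y₂ ∈ t1.below (k + 1) := TreeOrder.mem_below_iff.mpr (by omega)
          have h₁b : y₁ ∈ t1.below (k + 1) := TreeOrder.mem_below_iff.mpr hl₁
          have himm2 : t2.ImmSucc (f (p1 y₂)) (g y₂) := hgS.2
          have lgy₂ : t2.lev (g y₂) = k + 1 := hglev y₂ hh₂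
          have lfy₁ : t2.lev (f y₁) < k + 1 := by
            have := TreeOrder.mem_below_iff.mp (hbij.1 h₁b); omega
          rw [hglow y₁ hl₁]
          constructor
          · intro hle
            have hlt : t1.lt y₁ y₂ := ⟨hle, fun he => by rw [he] at hl₁; omega⟩
            have : t1.le y₁ (p1 y₂) := (TreeOrder.lt_iff_le_pred himm).mp hlt
            have : t2.le (f y₁) (f (p1 y₂)) := (hord y₁ h₁b (p1 y₂) hpb).mp this
            exact ((TreeOrder.lt_iff_le_pred himm2).mpr this).1
          · intro hle
            have hlt : t2.lt (f y₁) (g y₂) := ⟨hle, fun he => by rw [he] at lfy₁; omega⟩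
            have : t2.le (f y₁) (f (p1 y₂)) := (TreeOrder.lt_iff_le_pred himm2).mp hlt
            have : t1.le y₁ (p1 y₂) := (hord y₁ h₁b (p1 y₂) hpb).mpr this
            exact ((TreeOrder.lt_iff_le_pred himm).mpr this).1
        · -- y₁ high, y₂ low : both sides false
          have lgy₁ : t2.lev (g y₁) = k + 1 := hglev y₁ hh₁
          have lgy₂ : t2.lev (g y₂) < k + 1 := by
            rw [hglow y₂ hl₂]
            have := TreeOrder.mem_below_iff.mp (hbij.1 (TreeOrder.mem_below_iff.mpr hl₂))
            omega
          constructor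
          · intro hle
            have := TreeOrder.lev_le_of_le hle; omega
          · intro hle
            have := TreeOrder.lev_le_of_le hle; omega
        · -- both high
          have lgy₁ := hglev y₁ hh₁
          have lgy₂ := hglev y₂ hh₂
          constructor
          · intro hle
            have he : y₁ = y₂ := TreeOrder.eq_of_le_of_lev_le hle (by omega)
            rw [he]; exact t2.refl _
          · intro hle
            have he : g y₁ = g y₂ := TreeOrder.eq_of_le_of_lev_le hle (by omega)
            rw [hinjHigh y₁ y₂ hh₁ hh₂ he]; exact t1.refl _
      · -- pieces
        intro X y hy
        rcases hsplit y hy with hl | hh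
        · rw [hglow y hl]
          exact hpiece X y (TreeOrder.mem_below_iff.mpr hl)
        · obtain ⟨himm, hlevp, hXY, hgS⟩ := hkey y hh
          constructor
          · intro hX
            rw [h1.piece_unique hX (hP1 y)]
            exact hgS.1
          · intro hX
            rw [h2.piece_unique hX hgS.1]
            exact hP1 y
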